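/- Let X and Y be finite tree languages over a ranked alphabet Σ. A state (p,q) of the product automaton STAut_X ⊙ STAut_Y is accessible (i.e., (p,q) ∈ Δ_{X⊙Y}(t) for some tree t) if and only if p = q and p ∈ SubTreeSet(X) ∩ SubTreeSet(Y); consequently, the number of accessible states of STAut_X ⊙ STAut_Y equals |SubTreeSet(X) ∩ SubTreeSet(Y)|. -/
import Mathlib


/-- Trees over a ranked alphabet `σ` with arity function `ar`:
`t = f(t₁,…,t_k)` where `k = ar f`. -/
inductive RTree (σ : Type) (ar : σ → ℕ) : Type where
  | node : (f : σ) → (Fin (ar f) → RTree σ ar) → RTree σ ar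

variable {σ : Type} {ar : σ → ℕ}

/-- Number of nodes of a tree. -/
def RTree.size : RTree σ ar → ℕ
  | .node _ ts => 1 + ∑ i, (ts i).size

/-- The set `SubTree(t)` of subtrees of a tree. -/
def RTree.subTree : RTree σ ar → Set (RTree σ ar)
  | .node f ts => insert (.node f ts) (⋃ i, (ts i).subTree)

open Classical in
/-- `SubTreeSeries_t`: the indicator of the whole tree plus the sum of the
series of its immediate subtrees. -/
noncomputable def RTree.subTreeSeries : RTree σ ar → RTree σ ar → ℕ
  | .node f ts, s => (if s = .node f ts then 1 else 0) + ∑ i, (ts i).subTreeSeries s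

/-- The subtree of `t` rooted at position `p` (a node given by a list of child
indices), if `p` is indeed a node of `t`. -/
def RTree.subtreeAt : RTree σ ar → List ℕ → Option (RTree σ ar)
  | t, [] => some t
  | .node f ts, i :: p => if h : i < ar f then (ts ⟨i, h⟩).subtreeAt p else none

/-- `SubTreeSet(L) = ⋃_{t ∈ L} SubTree(t)` for a finite tree language `L`. -/
def subTreeSet (L : Finset (RTree σ ar)) : Set (RTree σ ar) := ⋃ t ∈ L, t.subTree

/-- `SubTreeSeries_L = ∑_{t ∈ L} SubTreeSeries_t`. -/
noncomputable def subTreeSeriesL (L : Finset (RTree σ ar)) (s : RTree σ ar) : ℕ :=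
  ∑ t ∈ L, t.subTreeSeries s

/-- The SubTree kernel of two finite tree languages:
`∑_t SubTreeSeries_X(t) · SubTreeSeries_Y(t)` (finitely supported sum). -/
noncomputable def subTreeKernel (X Y : Finset (RTree σ ar)) : ℕ :=
  ∑ᶠ t, subTreeSeriesL X t * subTreeSeriesL Y t

theorem RTree.subTree_finite (t : RTree σ ar) : t.subTree.Finite := by
  induction t with
  | node f ts ih =>
    rw [RTree.subTree]
    exact (Set.finite_iUnion ih).insert _

theorem subTreeSet_finite (L : Finset (RTree σ ar)) : (subTreeSet L).Finite :=
  Set.Finite.biUnion L.finite_toSet fun t _ => t.subTree_finite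

/-- A Root-Weighted Tree Automaton with weights in `M`:
a finite state type `Q`, a root weight function `ν`, and a transition relation `δ`,
where `δ f q qs` means `(q, f, qs 1, …, qs k) ∈ δ` (with `k = ar f`). -/
structure RWTA (σ : Type) (ar : σ → ℕ) (M : Type) where
  Q : Type
  finQ : Finite Q
  ν : Q → M
  δ : (f : σ) → Q → (Fin (ar f) → Q) → Prop

variable {M : Type}

/-- The set of states reached on a tree:
`Δ(f(t₁,…,t_k)) = δ(f, Δ(t₁), …, Δ(t_k))`. -/
def RWTA.Δ (A : RWTA σ ar M) : RTree σ ar → Set A.Q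
  | .node f ts => {q | ∃ qs, A.δ f q qs ∧ ∀ i, qs i ∈ A.Δ (ts i)}

/-- The formal tree series realized by an RWTA: `P_A(t) = ∑_{q ∈ Δ(t)} ν(q)`
(equal to `0` when `Δ(t) = ∅`). -/
noncomputable def RWTA.P [AddCommMonoid M] (A : RWTA σ ar M) (t : RTree σ ar) : M :=
  ∑ᶠ q ∈ A.Δ t, A.ν q

/-- The SubTree automaton `STAut_L` of a finite tree language `L`: states are the
elements of `SubTreeSet(L)`, root weight of a state `t` is `SubTreeSeries_L(t)`, and
the transitions are `(f(t₁,…,t_k), f, t₁, …, t_k)` for states `f(t₁,…,t_k)`. -/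
noncomputable def STAut (L : Finset (RTree σ ar)) : RWTA σ ar ℕ where
  Q := ↥(subTreeSet L)
  finQ := (subTreeSet_finite L).to_subtype
  ν q := subTreeSeriesL L q.1
  δ f q qs := (q : RTree σ ar) = .node f fun i => (qs i : RTree σ ar)

/-- The product RWTA `A ⊙ B`: states `Q_A × Q_B`, componentwise transitions, and
root weights `ν((p,q)) = ν_A(p) · ν_B(q)`. -/
def RWTA.prod [Mul M] (A B : RWTA σ ar M) : RWTA σ ar M where
  Q := A.Q × B.Q
  finQ := by have := A.finQ; have := B.finQ; exact inferInstance
  ν pq := A.ν pq.1 * B.ν pq.2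
  δ f pq qs := A.δ f pq.1 (fun i => (qs i).1) ∧ B.δ f pq.2 fun i => (qs i).2

lemma RTree.mem_subTree_self (t : RTree σ ar) : t ∈ t.subTree := by
  cases t with
  | node f ts => rw [RTree.subTree]; exact Set.mem_insert _ _

lemma RTree.subTree_trans {s t : RTree σ ar} (h : s ∈ t.subTree) :
    s.subTree ⊆ t.subTree := by
  induction t with
  | node f ts ih =>
    rw [RTree.subTree] at h ⊢
    rcases h with h | h
    · subst h; rw [RTree.subTree]
    · obtain ⟨S, ⟨i, rfl⟩, hs⟩ := h
      exact (ih i hs).trans ((Set.subset_iUnion (fun j => (ts j).subTree) i).trans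
        (Set.subset_insert _ _))

lemma RTree.child_mem_subTree (f : σ) (ts : Fin (ar f) → RTree σ ar) (i : Fin (ar f)) :
    ts i ∈ (RTree.node f ts).subTree := by
  rw [RTree.subTree]
  exact Set.mem_insert_iff.mpr (Or.inr ⟨_, ⟨i, rfl⟩, (ts i).mem_subTree_self⟩)

lemma child_mem_subTreeSet {L : Finset (RTree σ ar)} {f : σ} {ts : Fin (ar f) → RTree σ ar}
    (h : RTree.node f ts ∈ subTreeSet L) (i : Fin (ar f)) : ts i ∈ subTreeSet L := by
  simp only [subTreeSet, Set.mem_iUnion, exists_prop] at h ⊢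
  obtain ⟨t, ht, hmem⟩ := h
  exact ⟨t, ht, RTree.subTree_trans hmem (RTree.child_mem_subTree f ts i)⟩

lemma prod_STAut_Delta (X Y : Finset (RTree σ ar)) (t : RTree σ ar)
    (p : ↥(subTreeSet X)) (q : ↥(subTreeSet Y)) :
    (p, q) ∈ ((STAut X).prod (STAut Y)).Δ t ↔ (p : RTree σ ar) = t ∧ (q : RTree σ ar) = t := by
  induction t generalizing p q with
  | node f ts ih =>
    constructor
    · rintro ⟨qs, ⟨hp, hq⟩, hmem⟩
      simp only [STAut, RWTA.prod] at hp hq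
      have h1 := fun i => (ih i (qs i).1 (qs i).2).mp (hmem i)
      constructor
      · rw [hp]; congr 1; funext i; exact (h1 i).1
      · rw [hq]; congr 1; funext i; exact (h1 i).2
    · rintro ⟨hp, hq⟩
      have hX : ∀ i, ts i ∈ subTreeSet X := child_mem_subTreeSet (hp ▸ p.2)
      have hY : ∀ i, ts i ∈ subTreeSet Y := child_mem_subTreeSet (hq ▸ q.2)
      refine ⟨fun i => (⟨ts i, hX i⟩, ⟨ts i, hY i⟩), ⟨hp, hq⟩, fun i => ?_⟩
      exact (ih i _ _).mpr ⟨rfl, rfl⟩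

/-- A state `(p,q)` of `STAut_X ⊙ STAut_Y` is accessible iff `p = q` (as trees)
and `p ∈ SubTreeSet(X) ∩ SubTreeSet(Y)`; consequently the number of accessible
states equals `|SubTreeSet(X) ∩ SubTreeSet(Y)|`. -/
theorem prod_STAut_accessible (X Y : Finset (RTree σ ar)) :
    (∀ (p : ↥(subTreeSet X)) (q : ↥(subTreeSet Y)),
        (∃ t, (p, q) ∈ ((STAut X).prod (STAut Y)).Δ t) ↔
          ((p : RTree σ ar) = (q : RTree σ ar) ∧
            (p : RTree σ ar) ∈ subTreeSet X ∩ subTreeSet Y)) ∧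
      {z : ↥(subTreeSet X) × ↥(subTreeSet Y) |
          ∃ t, z ∈ ((STAut X).prod (STAut Y)).Δ t}.ncard =
        (subTreeSet X ∩ subTreeSet Y).ncard := by
  have key : ∀ (p : ↥(subTreeSet X)) (q : ↥(subTreeSet Y)),
      (∃ t, (p, q) ∈ ((STAut X).prod (STAut Y)).Δ t) ↔
        ((p : RTree σ ar) = (q : RTree σ ar) ∧
          (p : RTree σ ar) ∈ subTreeSet X ∩ subTreeSet Y) := by
    intro p q
    constructor
    · rintro ⟨t, ht⟩
      obtain ⟨hp, hq⟩ := (prod_STAut_Delta X Y t p q).mp ht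
      exact ⟨hp.trans hq.symm, p.2, by rw [hp, ← hq]; exact q.2⟩
    · rintro ⟨hpq, _⟩
      exact ⟨p, (prod_STAut_Delta X Y p p q).mpr ⟨rfl, hpq.symm⟩⟩
  refine ⟨key, ?_⟩
  have hset : {z : ↥(subTreeSet X) × ↥(subTreeSet Y) |
      ∃ t, z ∈ ((STAut X).prod (STAut Y)).Δ t} =
      {z | (z.1 : RTree σ ar) = (z.2 : RTree σ ar)} := by
    ext ⟨p, q⟩
    rw [Set.mem_setOf_eq, key p q]
    exact ⟨fun h => h.1, fun h => ⟨h, p.2, h ▸ q.2⟩⟩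
  rw [hset]
  have himg : (fun z : ↥(subTreeSet X) × ↥(subTreeSet Y) => (z.1 : RTree σ ar)) ''
      {z | (z.1 : RTree σ ar) = (z.2 : RTree σ ar)} = subTreeSet X ∩ subTreeSet Y := by
    ext t
    constructor
    · rintro ⟨⟨p, q⟩, hz, rfl⟩
      simp only [Set.mem_setOf_eq] at hz
      refine ⟨p.2, ?_⟩
      show (p : RTree σ ar) ∈ subTreeSet Y
      exact hz ▸ q.2
    · rintro ⟨hX, hY⟩
      exact ⟨(⟨t, hX⟩, ⟨t, hY⟩), rfl, rfl⟩
  rw [← himg]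
  refine (Set.ncard_image_of_injOn ?_).symm
  rintro ⟨p, q⟩ hz ⟨p', q'⟩ hz' h
  simp only [Set.mem_setOf_eq] at hz hz'
  simp only at h
  have hq : (q : RTree σ ar) = (q' : RTree σ ar) := by rw [← hz, ← hz', h]
  exact Prod.ext (Subtype.ext h) (Subtype.ext hq)
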